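/- For every real γ ≥ 1, ∫_{ℝ³} ( γ³ / (π² (1 + γ² ‖x‖²)²) ) · log( γ³ (1 + ‖x‖²)² / (1 + γ² ‖x‖²)² ) dx = log( (γ + 1)⁴ / (16 γ) ) + 2(1 − γ)/(1 + γ). Equivalently, the Kullback–Leibler divergence of the 3-dimensional isotropic Cauchy distribution Cauchy₃(0, γ⁻²I₃) from Cauchy₃(0, I₃) equals log((γ+1)⁴/(16γ)) + 2(1−γ)/(1+γ). -/

import Mathlib

open Real MeasureTheory

open Set Filter Topology

lemma phi_hasDeriv (u : ℝ) :
    HasDerivAt (fun u : ℝ => (Real.arctan u - u / (1 + u ^ 2)) / 2)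
      (u ^ 2 / (1 + u ^ 2) ^ 2) u := by
  have h1 : (0:ℝ) < 1 + u ^ 2 := by positivity
  have := ((Real.hasDerivAt_arctan u).sub
    (((hasDerivAt_id u).div (by simpa using (hasDerivAt_pow 2 u).const_add 1 : HasDerivAt (fun x : ℝ => 1 + x ^ 2) (2 * u) u) h1.ne'))).div_const 2
  refine this.congr_deriv ?_
  simp only [id_eq]
  field_simp
  ring

lemma aux_tendsto_frac : Tendsto (fun u : ℝ => u / (1 + u ^ 2)) atTop (𝓝 0) := by
  have h2 : Tendsto (fun u : ℝ => u + u⁻¹) atTop atTop :=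
    Filter.Tendsto.atTop_add tendsto_id tendsto_inv_atTop_zero
  have h3 := h2.inv_tendsto_atTop
  apply h3.congr'
  filter_upwards [eventually_gt_atTop 0] with u hu
  have huu : u + u⁻¹ = (1 + u ^ 2) / u := by field_simp; ring
  simp only [Pi.inv_apply, huu, inv_div]

lemma phi_tendsto :
    Tendsto (fun u : ℝ => (Real.arctan u - u / (1 + u ^ 2)) / 2) atTop (𝓝 (π / 4)) := by
  have harc : Tendsto Real.arctan atTop (𝓝 (π / 2)) :=
    Real.tendsto_arctan_atTop.mono_right nhdsWithin_le_nhds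
  have := (harc.sub aux_tendsto_frac).div_const 2
  convert this using 2
  ring

lemma phi_integral : ∫ u in Ioi (0:ℝ), u ^ 2 / (1 + u ^ 2) ^ 2 = π / 4 := by
  have := integral_Ioi_of_hasDerivAt_of_nonneg' (g := fun u : ℝ => (Real.arctan u - u / (1 + u ^ 2)) / 2)
    (g' := fun u : ℝ => u ^ 2 / (1 + u ^ 2) ^ 2) (a := 0) (l := π / 4)
    (fun x _ => phi_hasDeriv x) (fun x _ => by positivity) phi_tendsto
  simpa using this

lemma phi_integrable : IntegrableOn (fun u : ℝ => u ^ 2 / (1 + u ^ 2) ^ 2) (Ioi 0) :=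
  integrableOn_Ioi_deriv_of_nonneg' (fun x _ => phi_hasDeriv x) (fun x _ => by positivity)
    phi_tendsto

lemma inv_one_add_sq_hasDeriv (u : ℝ) :
    HasDerivAt (fun u : ℝ => (Real.arctan u + u / (1 + u ^ 2)) / 2)
      (1 / (1 + u ^ 2) ^ 2) u := by
  have h1 : (0:ℝ) < 1 + u ^ 2 := by positivity
  have := ((Real.hasDerivAt_arctan u).add
    (((hasDerivAt_id u).div (by simpa using (hasDerivAt_pow 2 u).const_add 1 : HasDerivAt (fun x : ℝ => 1 + x ^ 2) (2 * u) u) h1.ne'))).div_const 2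
  refine this.congr_deriv ?_
  simp only [id_eq]
  field_simp
  ring

lemma arctan_div_hasDeriv {a : ℝ} (ha : 0 < a) (u : ℝ) :
    HasDerivAt (fun u : ℝ => a⁻¹ * Real.arctan (u / a)) (1 / (a ^ 2 + u ^ 2)) u := by
  have h := (Real.hasDerivAt_arctan (u / a)).comp u ((hasDerivAt_id u).div_const a)
  have := h.const_mul a⁻¹
  refine this.congr_deriv ?_
  have h2 : (0:ℝ) < a ^ 2 + u ^ 2 := by positivity
  field_simp

lemma arctan_div_tendsto {a : ℝ} (ha : 0 < a) :
    Tendsto (fun u : ℝ => a⁻¹ * Real.arctan (u / a)) atTop (𝓝 (a⁻¹ * (π / 2))) := by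
  have harc : Tendsto Real.arctan atTop (𝓝 (π / 2)) :=
    Real.tendsto_arctan_atTop.mono_right nhdsWithin_le_nhds
  exact (harc.comp (tendsto_id.atTop_div_const ha)).const_mul _

lemma key_integral {a : ℝ} (ha : 0 < a) :
    ∫ u in Ioi (0:ℝ), u ^ 2 / ((1 + u ^ 2) ^ 2 * (a ^ 2 + u ^ 2)) = π / (4 * (1 + a) ^ 2) := by
  rcases eq_or_ne a 1 with rfl | hne
  · -- a = 1
    have hg : ∀ u : ℝ, HasDerivAt
        (fun u : ℝ => Real.arctan u / 8 + (u ^ 3 - u) / (8 * (1 + u ^ 2) ^ 2))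
        (u ^ 2 / ((1 + u ^ 2) ^ 2 * (1 ^ 2 + u ^ 2))) u := by
      intro u
      have h1 : (0:ℝ) < 1 + u ^ 2 := by positivity
      have hden : HasDerivAt (fun u : ℝ => 8 * (1 + u ^ 2) ^ 2)
          (8 * (2 * (1 + u ^ 2) * (2 * u))) u := by
        have := (((hasDerivAt_pow 2 u).const_add 1).pow 2).const_mul (8:ℝ)
        refine this.congr_deriv ?_
        ring
      have hnum : HasDerivAt (fun u : ℝ => u ^ 3 - u) (3 * u ^ 2 - 1) u := by
        exact (by simpa using (hasDerivAt_pow 3 u).sub (hasDerivAt_id u) : HasDerivAt ((fun x : ℝ => x ^ 3) - id) (3 * u ^ 2 - 1) u)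
      have := ((Real.hasDerivAt_arctan u).div_const 8).add
        ((hnum.div hden (by positivity)))
      refine this.congr_deriv ?_
      field_simp
      ring
    have hlim : Tendsto
        (fun u : ℝ => Real.arctan u / 8 + (u ^ 3 - u) / (8 * (1 + u ^ 2) ^ 2))
        atTop (𝓝 (π / 16)) := by
      have harc : Tendsto (fun u : ℝ => Real.arctan u / 8) atTop (𝓝 (π / 16)) := by
        have := (Real.tendsto_arctan_atTop.mono_right nhdsWithin_le_nhds).div_const 8
        convert this using 2
        ring
      have hfrac : Tendsto (fun u : ℝ => (u ^ 3 - u) / (8 * (1 + u ^ 2) ^ 2)) atTop (𝓝 0) := by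
        have h2 : Tendsto (fun u : ℝ => (u⁻¹ - u⁻¹ ^ 3) / (8 * (u⁻¹ ^ 2 + 1) ^ 2)) atTop
            (𝓝 ((0 - 0 ^ 3) / (8 * ((0:ℝ) ^ 2 + 1) ^ 2))) := by
          apply Tendsto.div
          · exact tendsto_inv_atTop_zero.sub (tendsto_inv_atTop_zero.pow 3)
          · exact (((tendsto_inv_atTop_zero.pow 2).add_const 1).pow 2).const_mul 8
          · norm_num
        norm_num at h2
        apply Tendsto.congr' _ h2
        filter_upwards [eventually_gt_atTop 0] with u hu
        rw [div_eq_div_iff (by positivity) (by positivity)]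
        field_simp
      have := harc.add hfrac
      simpa using this
    have := integral_Ioi_of_hasDerivAt_of_nonneg' (a := 0) (fun x _ => hg x)
      (fun x _ => by positivity) hlim
    rw [this]
    norm_num
  · -- a ≠ 1
    have ha2 : a ^ 2 - 1 ≠ 0 := by
      intro h
      have h' : (a - 1) * (a + 1) = 0 := by nlinarith
      rcases mul_eq_zero.mp h' with h'' | h''
      · exact hne (by linarith)
      · linarith
    set c1 : ℝ := 1 / (a ^ 2 - 1) + 1 / (a ^ 2 - 1) ^ 2 with hc1
    set c2 : ℝ := -(1 / (a ^ 2 - 1)) with hc2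
    set g : ℝ → ℝ := fun u => c1 * Real.arctan u + (c2 * ((Real.arctan u + u / (1 + u ^ 2)) / 2)
      + (-c1) * (a⁻¹ * Real.arctan (u / a))) with hgdef
    have hg : ∀ u : ℝ, HasDerivAt g (u ^ 2 / ((1 + u ^ 2) ^ 2 * (a ^ 2 + u ^ 2))) u := by
      intro u
      have h1 : (0:ℝ) < 1 + u ^ 2 := by positivity
      have h2 : (0:ℝ) < a ^ 2 + u ^ 2 := by positivity
      have := ((Real.hasDerivAt_arctan u).const_mul c1).add
        (((inv_one_add_sq_hasDeriv u).const_mul c2).add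
          (((arctan_div_hasDeriv ha u).const_mul (-c1))))
      have h3 : c1 * (1 / (1 + u ^ 2)) + (c2 * (1 / (1 + u ^ 2) ^ 2)
          + (-c1) * (1 / (a ^ 2 + u ^ 2))) = u ^ 2 / ((1 + u ^ 2) ^ 2 * (a ^ 2 + u ^ 2)) := by
        rw [hc1, hc2]
        field_simp
        ring
      rw [← h3]
      exact this
    have hlim : Tendsto g atTop (𝓝 (c1 * (π / 2) + (c2 * ((π / 2 + 0) / 2)
        + (-c1) * (a⁻¹ * (π / 2))))) := by
      have harc : Tendsto Real.arctan atTop (𝓝 (π / 2)) :=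
        Real.tendsto_arctan_atTop.mono_right nhdsWithin_le_nhds
      exact (harc.const_mul c1).add
        ((((harc.add aux_tendsto_frac).div_const 2).const_mul c2).add
          ((arctan_div_tendsto ha).const_mul (-c1)))
    have := integral_Ioi_of_hasDerivAt_of_nonneg' (a := 0) (fun x _ => hg x)
      (fun x _ => by positivity) hlim
    rw [this]
    have h1a : (1:ℝ) + a ≠ 0 := by positivity
    simp only [hgdef, hc1, hc2]
    norm_num [Real.arctan_zero]
    field_simp
    ring

lemma logquot_continuous {b : ℝ} (hb : 0 < b) :
    Continuous (fun u : ℝ => u ^ 2 / (1 + u ^ 2) ^ 2 * Real.log ((u ^ 2 + b ^ 2) / (u ^ 2 + 1))) := by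
  apply Continuous.mul
  · exact (continuous_pow 2).div (by continuity) (fun u => by positivity)
  · apply Continuous.log
    · exact ((continuous_pow 2).add continuous_const).div (by continuity) (fun u => by positivity)
    · intro u
      positivity

lemma logquot_integrable {a : ℝ} (ha : 1 ≤ a) :
    IntegrableOn (fun u : ℝ => u ^ 2 / (1 + u ^ 2) ^ 2 * Real.log ((u ^ 2 + a ^ 2) / (u ^ 2 + 1)))
      (Ioi 0) := by
  have ha0 : (0:ℝ) < a := lt_of_lt_of_le one_pos ha
  apply Integrable.mono' ((phi_integrable.const_mul (2 * Real.log a)))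
  · exact (logquot_continuous ha0).aestronglyMeasurable.restrict
  · refine ae_of_all _ fun u => ?_
    have h1 : (0:ℝ) < 1 + u ^ 2 := by positivity
    have h2 : (1:ℝ) ≤ (u ^ 2 + a ^ 2) / (u ^ 2 + 1) := by
      rw [le_div_iff₀ (by positivity)]
      nlinarith
    have h3 : (u ^ 2 + a ^ 2) / (u ^ 2 + 1) ≤ a ^ 2 := by
      rw [div_le_iff₀ (by positivity)]
      nlinarith [sq_nonneg u, one_le_pow₀ ha (n := 2)]
    have hlog0 : 0 ≤ Real.log ((u ^ 2 + a ^ 2) / (u ^ 2 + 1)) := Real.log_nonneg h2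
    have hlogle : Real.log ((u ^ 2 + a ^ 2) / (u ^ 2 + 1)) ≤ 2 * Real.log a := by
      calc Real.log ((u ^ 2 + a ^ 2) / (u ^ 2 + 1)) ≤ Real.log (a ^ 2) :=
            Real.log_le_log (by linarith) h3
        _ = 2 * Real.log a := by rw [Real.log_pow]; push_cast; ring
    rw [Real.norm_eq_abs, abs_mul, abs_of_nonneg (by positivity), abs_of_nonneg hlog0]
    calc u ^ 2 / (1 + u ^ 2) ^ 2 * Real.log ((u ^ 2 + a ^ 2) / (u ^ 2 + 1))
        ≤ u ^ 2 / (1 + u ^ 2) ^ 2 * (2 * Real.log a) := by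
          apply mul_le_mul_of_nonneg_left hlogle (by positivity)
      _ = 2 * Real.log a * (u ^ 2 / (1 + u ^ 2) ^ 2) := by ring

lemma D_hasDeriv {a : ℝ} (ha : 1 ≤ a) :
    HasDerivAt (fun b : ℝ => ∫ u in Ioi (0:ℝ),
        u ^ 2 / (1 + u ^ 2) ^ 2 * Real.log ((u ^ 2 + b ^ 2) / (u ^ 2 + 1)))
      (π * a / (2 * (1 + a) ^ 2)) a := by
  have ha0 : (0:ℝ) < a := lt_of_lt_of_le one_pos ha
  set F' : ℝ → ℝ → ℝ := fun b u => 2 * b * (u ^ 2 / ((1 + u ^ 2) ^ 2 * (b ^ 2 + u ^ 2)))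
    with hF'
  have key := hasDerivAt_integral_of_dominated_loc_of_deriv_le (μ := volume.restrict (Ioi 0))
    (F := fun b u => u ^ 2 / (1 + u ^ 2) ^ 2 * Real.log ((u ^ 2 + b ^ 2) / (u ^ 2 + 1)))
    (F' := F') (x₀ := a) (s := Metric.ball a (1/2)) (bound := fun u => 4 * (u ^ 2 / (1 + u ^ 2) ^ 2))
    (Metric.ball_mem_nhds a (by norm_num))
    (by
      filter_upwards [Metric.ball_mem_nhds a (by norm_num : (0:ℝ) < 1/2)] with b hb
      have hb0 : 0 < b := by
        have := Metric.mem_ball.mp hb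
        rw [Real.dist_eq, abs_lt] at this
        linarith
      exact (logquot_continuous hb0).aestronglyMeasurable.restrict)
    (logquot_integrable ha)
    ((continuous_const.mul ((continuous_pow 2).div (by continuity)
        (fun u => by positivity))).aestronglyMeasurable.restrict)
    (by
      refine ae_of_all _ fun u b hb => ?_
      have hb0 : 1/2 < b := by
        have := Metric.mem_ball.mp hb
        rw [Real.dist_eq, abs_lt] at this
        linarith
      have h1 : (0:ℝ) < 1 + u ^ 2 := by positivity
      have h2 : (0:ℝ) < b ^ 2 + u ^ 2 := by positivity
      have hval : F' b u = 2 * b * u ^ 2 / ((1 + u ^ 2) ^ 2 * (b ^ 2 + u ^ 2)) := by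
        rw [hF']; ring
      rw [hval, Real.norm_eq_abs, abs_of_nonneg (by positivity)]
      show 2 * b * u ^ 2 / ((1 + u ^ 2) ^ 2 * (b ^ 2 + u ^ 2)) ≤ 4 * (u ^ 2 / (1 + u ^ 2) ^ 2)
      rw [show (4:ℝ) * (u ^ 2 / (1 + u ^ 2) ^ 2) = 4 * u ^ 2 / (1 + u ^ 2) ^ 2 by ring,
        div_le_div_iff₀ (by positivity) (by positivity)]
      have hkey : (0:ℝ) ≤ 4 * (b ^ 2 + u ^ 2) - 2 * b := by
        nlinarith [sq_nonneg (2 * b - 1), sq_nonneg u]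
      nlinarith [mul_nonneg (mul_nonneg (sq_nonneg u) (sq_nonneg (1 + u ^ 2))) hkey]
      )
    (phi_integrable.const_mul 4)
    (by
      refine ae_of_all _ fun u b hb => ?_
      have hb0 : 0 < b := by
        have := Metric.mem_ball.mp hb
        rw [Real.dist_eq, abs_lt] at this
        linarith
      have h1 : (0:ℝ) < u ^ 2 + 1 := by positivity
      have h2 : (0:ℝ) < u ^ 2 + b ^ 2 := by positivity
      have hd : HasDerivAt (fun b : ℝ => Real.log ((u ^ 2 + b ^ 2) / (u ^ 2 + 1)))
          (2 * b / (u ^ 2 + b ^ 2)) b := by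
        have hinner : HasDerivAt (fun b : ℝ => u ^ 2 + b ^ 2) (2 * b) b := by
          simpa using (hasDerivAt_pow 2 b).const_add (u ^ 2)
        have h5 := hinner.log h2.ne'
        have hev : (fun c : ℝ => Real.log ((u ^ 2 + c ^ 2) / (u ^ 2 + 1)))
            =ᶠ[nhds b] fun c : ℝ => Real.log (u ^ 2 + c ^ 2) - Real.log (u ^ 2 + 1) := by
          filter_upwards [eventually_gt_nhds hb0] with c hc
          have hc2 : (0:ℝ) < u ^ 2 + c ^ 2 := by nlinarith
          rw [Real.log_div hc2.ne' h1.ne']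
        have h6 : HasDerivAt (fun c : ℝ => Real.log (u ^ 2 + c ^ 2) - Real.log (u ^ 2 + 1))
            (2 * b / (u ^ 2 + b ^ 2)) b := by
          simpa using h5.sub_const (Real.log (u ^ 2 + 1))
        exact h6.congr_of_eventuallyEq hev
      have := hd.const_mul (u ^ 2 / (1 + u ^ 2) ^ 2)
      refine this.congr_deriv ?_
      rw [hF']
      have h3 : (0:ℝ) < 1 + u ^ 2 := by positivity
      field_simp
      ring)
  rcases key with ⟨-, hder⟩
  have hval : (∫ u in Ioi (0:ℝ), F' a u) = π * a / (2 * (1 + a) ^ 2) := by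
    rw [hF']
    simp only
    rw [MeasureTheory.integral_const_mul, key_integral ha0]
    have h4 : (0:ℝ) < 1 + a := by linarith
    field_simp
    ring
  rwa [hval] at hder

lemma D_value {γ : ℝ} (hγ : 1 ≤ γ) :
    ∫ u in Ioi (0:ℝ), u ^ 2 / (1 + u ^ 2) ^ 2 * Real.log ((u ^ 2 + γ ^ 2) / (u ^ 2 + 1))
      = π / 2 * (Real.log (1 + γ) + 1 / (1 + γ) - Real.log 2 - 1 / 2) := by
  set D : ℝ → ℝ := fun b => ∫ u in Ioi (0:ℝ),
    u ^ 2 / (1 + u ^ 2) ^ 2 * Real.log ((u ^ 2 + b ^ 2) / (u ^ 2 + 1)) with hD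
  have hD1 : D 1 = 0 := by
    have h0 : (fun u : ℝ => u ^ 2 / (1 + u ^ 2) ^ 2 * Real.log ((u ^ 2 + 1 ^ 2) / (u ^ 2 + 1)))
        = fun _ => (0:ℝ) := by
      funext u
      have h1 : (u ^ 2 + 1 ^ 2) / (u ^ 2 + 1) = 1 := by
        rw [one_pow, div_self (by positivity)]
      rw [h1, Real.log_one, mul_zero]
    show (∫ u in Ioi (0:ℝ), u ^ 2 / (1 + u ^ 2) ^ 2 * Real.log ((u ^ 2 + 1 ^ 2) / (u ^ 2 + 1))) = 0
    rw [h0, integral_zero]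
  have huIcc : uIcc (1:ℝ) γ = Icc 1 γ := uIcc_of_le hγ
  have hcont : IntervalIntegrable (fun a : ℝ => π * a / (2 * (1 + a) ^ 2)) volume 1 γ := by
    apply ContinuousOn.intervalIntegrable
    apply ContinuousOn.div
    · exact (continuous_const.mul continuous_id).continuousOn
    · exact (continuous_const.mul ((continuous_const.add continuous_id).pow 2)).continuousOn
    · intro x hx
      rw [huIcc] at hx
      have : (1:ℝ) ≤ x := hx.1
      positivity
  have hftc := intervalIntegral.integral_eq_sub_of_hasDerivAt
    (f := D) (f' := fun a : ℝ => π * a / (2 * (1 + a) ^ 2))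
    (fun x hx => by
      rw [huIcc] at hx
      exact D_hasDeriv hx.1) hcont
  -- compute the interval integral with explicit antiderivative
  have hpsi : ∀ x ∈ uIcc (1:ℝ) γ, HasDerivAt
      (fun a : ℝ => π / 2 * (Real.log (1 + a) + (1 + a)⁻¹))
      (π * x / (2 * (1 + x) ^ 2)) x := by
    intro x hx
    rw [huIcc] at hx
    have hx1 : (0:ℝ) < 1 + x := by have := hx.1; linarith
    have hlog : HasDerivAt (fun a : ℝ => Real.log (1 + a)) (1 / (1 + x)) x := by
      have := ((hasDerivAt_id x).const_add 1).log hx1.ne'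
      simpa using this
    have hinv : HasDerivAt (fun a : ℝ => (1 + a)⁻¹) (-1 / (1 + x) ^ 2) x := by
      have := ((hasDerivAt_id x).const_add 1).inv hx1.ne'
      exact (by simpa using this : HasDerivAt (fun x : ℝ => 1 + x)⁻¹ (-1 / (1 + x) ^ 2) x)
    have := (hlog.add hinv).const_mul (π / 2)
    refine this.congr_deriv ?_
    field_simp
    ring
  have hint2 := intervalIntegral.integral_eq_sub_of_hasDerivAt hpsi hcont
  rw [hint2, hD1, sub_zero] at hftc
  have hgoal : (∫ u in Ioi (0:ℝ),
      u ^ 2 / (1 + u ^ 2) ^ 2 * Real.log ((u ^ 2 + γ ^ 2) / (u ^ 2 + 1))) = D γ := rfl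
  rw [hgoal, ← hftc]
  norm_num
  ring

/-- For every real `γ ≥ 1`,
`∫_{ℝ³} (γ³ / (π² (1 + γ² ‖x‖²)²)) * log (γ³ (1 + ‖x‖²)² / (1 + γ² ‖x‖²)²) dx
  = log ((γ + 1)⁴ / (16 γ)) + 2 (1 - γ) / (1 + γ)`:
the Kullback–Leibler divergence of the isotropic Cauchy distribution `Cauchy₃(0, γ⁻² I₃)`
from `Cauchy₃(0, I₃)`. -/
theorem kl_cauchy_three_dim (γ : ℝ) (hγ : 1 ≤ γ) :
    ∫ x : EuclideanSpace ℝ (Fin 3),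
        (γ ^ 3 / (π ^ 2 * (1 + γ ^ 2 * ‖x‖ ^ 2) ^ 2)) *
          Real.log (γ ^ 3 * (1 + ‖x‖ ^ 2) ^ 2 / (1 + γ ^ 2 * ‖x‖ ^ 2) ^ 2) =
      Real.log ((γ + 1) ^ 4 / (16 * γ)) + 2 * (1 - γ) / (1 + γ) := by
  have hγ0 : (0:ℝ) < γ := lt_of_lt_of_le one_pos hγ
  have hπ := Real.pi_pos
  set f : ℝ → ℝ := fun r => γ ^ 3 / (π ^ 2 * (1 + γ ^ 2 * r ^ 2) ^ 2) *
    Real.log (γ ^ 3 * (1 + r ^ 2) ^ 2 / (1 + γ ^ 2 * r ^ 2) ^ 2) with hf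
  -- polar coordinates
  have hpolar := MeasureTheory.integral_fun_norm_addHaar
    (volume : Measure (EuclideanSpace ℝ (Fin 3))) f
  simp only [finrank_euclideanSpace_fin] at hpolar
  -- volume of the unit ball
  have hvol : (volume (Metric.ball (0 : EuclideanSpace ℝ (Fin 3)) 1)).toReal = 4 * π / 3 := by
    rw [EuclideanSpace.volume_ball]
    have hcard : Fintype.card (Fin 3) = 3 := Fintype.card_fin 3
    rw [hcard]
    have hΓ : Real.Gamma ((3:ℝ) / 2 + 1) = 3 / 4 * Real.sqrt π := by
      rw [Real.Gamma_add_one (by norm_num), show (3:ℝ)/2 = 1/2 + 1 by norm_num,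
        Real.Gamma_add_one (by norm_num), Real.Gamma_one_half_eq]
      ring
    have hs0 : Real.sqrt π ≠ 0 := ne_of_gt (Real.sqrt_pos.mpr hπ)
    have hsq : Real.sqrt π ^ 2 = π := Real.sq_sqrt hπ.le
    have hval : Real.sqrt π ^ 3 / Real.Gamma ((3:ℝ) / 2 + 1) = 4 * π / 3 := by
      rw [hΓ, show Real.sqrt π ^ 3 = Real.sqrt π ^ 2 * Real.sqrt π by ring, hsq]
      field_simp
    have h3 : ((3:ℕ):ℝ) / 2 + 1 = (3:ℝ) / 2 + 1 := by norm_num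
    rw [h3, ENNReal.toReal_mul, ENNReal.toReal_pow, ENNReal.toReal_ofReal zero_le_one,
      one_pow, one_mul, ENNReal.toReal_ofReal (by rw [hval]; positivity), hval]
  -- substitution u = γ r
  have hsub := integral_comp_mul_left_Ioi (fun u : ℝ => u ^ 2 * f u) 0 (inv_pos.mpr hγ0)
  rw [mul_zero, inv_inv, smul_eq_mul] at hsub
  -- pointwise identity
  have hfun : (fun u : ℝ => γ⁻¹ * ((γ⁻¹ * u) ^ 2 * f (γ⁻¹ * u)))
      = fun u : ℝ => 1 / π ^ 2 * ((- Real.log γ) * (u ^ 2 / (1 + u ^ 2) ^ 2)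
        + 2 * (u ^ 2 / (1 + u ^ 2) ^ 2 * Real.log ((u ^ 2 + γ ^ 2) / (u ^ 2 + 1)))) := by
    funext u
    have p2 : (0:ℝ) < 1 + u ^ 2 := by positivity
    have p1 : (0:ℝ) < u ^ 2 + γ ^ 2 := by positivity
    have e1 : γ ^ 2 * (γ⁻¹ * u) ^ 2 = u ^ 2 := by
      field_simp
    have e2 : 1 + (γ⁻¹ * u) ^ 2 = (u ^ 2 + γ ^ 2) / γ ^ 2 := by
      field_simp
      ring
    rw [hf]
    simp only [e1, e2]
    have hlog : Real.log (γ ^ 3 * ((u ^ 2 + γ ^ 2) / γ ^ 2) ^ 2 / (1 + u ^ 2) ^ 2)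
        = - Real.log γ + 2 * Real.log ((u ^ 2 + γ ^ 2) / (u ^ 2 + 1)) := by
      rw [show (1:ℝ) + u ^ 2 = u ^ 2 + 1 by ring]
      rw [Real.log_div (by positivity) (by positivity),
        Real.log_mul (by positivity) (by positivity)]
      simp only [Real.log_pow]
      rw [Real.log_div p1.ne' (by positivity), Real.log_div p1.ne' (by positivity)]
      simp only [Real.log_pow]
      push_cast
      ring
    rw [hlog]
    have hπ2 : π ^ 2 ≠ 0 := by positivity
    field_simp
  -- split and evaluate the 1D integral
  have hsplit : (∫ u in Ioi (0:ℝ), 1 / π ^ 2 * ((- Real.log γ) * (u ^ 2 / (1 + u ^ 2) ^ 2)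
        + 2 * (u ^ 2 / (1 + u ^ 2) ^ 2 * Real.log ((u ^ 2 + γ ^ 2) / (u ^ 2 + 1)))))
      = 1 / π ^ 2 * ((- Real.log γ) * (π / 4)
        + 2 * (π / 2 * (Real.log (1 + γ) + 1 / (1 + γ) - Real.log 2 - 1 / 2))) := by
    rw [MeasureTheory.integral_const_mul]
    congr 1
    rw [MeasureTheory.integral_add (phi_integrable.const_mul _)
      ((logquot_integrable hγ).const_mul 2),
      MeasureTheory.integral_const_mul, MeasureTheory.integral_const_mul,
      phi_integral, D_value hγ]
  -- put everything together
  have hsub2 : (∫ y in Ioi (0:ℝ), y ^ 2 * f y)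
      = γ⁻¹ * ∫ x in Ioi (0:ℝ), (γ⁻¹ * x) ^ 2 * f (γ⁻¹ * x) := by
    rw [show (∫ x in Ioi (0:ℝ), (γ⁻¹ * x) ^ 2 * f (γ⁻¹ * x))
        = γ * ∫ x in Ioi (0:ℝ), x ^ 2 * f x from hsub]
    rw [← mul_assoc, inv_mul_cancel₀ hγ0.ne', one_mul]
  have hmain : (∫ x : EuclideanSpace ℝ (Fin 3), f ‖x‖)
      = 4 * π * (1 / π ^ 2 * ((- Real.log γ) * (π / 4)
        + 2 * (π / 2 * (Real.log (1 + γ) + 1 / (1 + γ) - Real.log 2 - 1 / 2)))) := by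
    rw [hpolar]
    have hpow : (∫ y in Ioi (0:ℝ), y ^ (3 - 1) • f y) = ∫ y in Ioi (0:ℝ), y ^ 2 * f y := by
      congr 1
    rw [nsmul_eq_mul, smul_eq_mul, measureReal_def, hvol, hpow, hsub2, ← MeasureTheory.integral_const_mul, hfun, hsplit]
    push_cast
    ring
  have hLHS : (∫ x : EuclideanSpace ℝ (Fin 3),
      (γ ^ 3 / (π ^ 2 * (1 + γ ^ 2 * ‖x‖ ^ 2) ^ 2)) *
          Real.log (γ ^ 3 * (1 + ‖x‖ ^ 2) ^ 2 / (1 + γ ^ 2 * ‖x‖ ^ 2) ^ 2))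
      = ∫ x : EuclideanSpace ℝ (Fin 3), f ‖x‖ := rfl
  rw [hLHS, hmain]
  have h1γ : (0:ℝ) < 1 + γ := by linarith
  rw [show γ + 1 = 1 + γ by ring,
    Real.log_div (by positivity) (by positivity), Real.log_pow,
    Real.log_mul (by norm_num) hγ0.ne', show (16:ℝ) = 2 ^ 4 by norm_num, Real.log_pow]
  push_cast
  field_simp
  ring
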